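/- arXiv:1106.4720 — 2 statements merged into one kernel-verified Lean document; each statement's English description precedes it below -/
import Mathlib

section
/- For the 3-dimensional unimodular Lie algebra with Milnor basis {u,v,w} (brackets [u,v]=aw, [v,w]=bu, [w,u]=cv) and left invariant metric making x=⟨u,u⟩, y=⟨v,v⟩, z=⟨w,w⟩ with u,v,w orthogonal, the Ricci curvature satisfies Ric(u,u) = (1/(2yz))(b²x² − (cy − az)²). -/
noncomputable section

/-- The Milnor bracket `[u,v] = a•w`, `[v,w] = b•u`, `[w,u] = c•v` on `ℝ³`. -/
def milnorBracket (a b c : ℝ) (x y : Fin 3 → ℝ) : Fin 3 → ℝ :=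
  ![b * (x 1 * y 2 - x 2 * y 1), c * (x 2 * y 0 - x 0 * y 2), a * (x 0 * y 1 - x 1 * y 0)]

/-- The inner product making `u, v, w` orthogonal with `⟨u,u⟩ = x`, `⟨v,v⟩ = y`, `⟨w,w⟩ = z`. -/
def gMet (x y z : ℝ) (p q : Fin 3 → ℝ) : ℝ :=
  x * p 0 * q 0 + y * p 1 * q 1 + z * p 2 * q 2

/-- The orthonormal basis `u/√x, v/√y, w/√z`. -/
def onb (x y z : ℝ) : Fin 3 → (Fin 3 → ℝ) :=
  ![(Real.sqrt x)⁻¹ • (Pi.single 0 1 : Fin 3 → ℝ),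
    (Real.sqrt y)⁻¹ • (Pi.single 1 1 : Fin 3 → ℝ),
    (Real.sqrt z)⁻¹ • (Pi.single 2 1 : Fin 3 → ℝ)]

/-- The Killing form `B(X,Y) = tr(ad_X ∘ ad_Y)`. -/
def killingF (a b c : ℝ) (X Y : Fin 3 → ℝ) : ℝ :=
  ∑ i : Fin 3, milnorBracket a b c X (milnorBracket a b c Y (Pi.single i 1)) i

/-- The Ricci curvature of the left invariant metric, via the unimodular formula
`Ric(X,X) = −½B(X,X) − ½Σᵢ|[X,eᵢ]|² + ¼Σᵢⱼ⟨[eᵢ,eⱼ],X⟩²` for an orthonormal basis `(eᵢ)`. -/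
def ricQ (a b c x y z : ℝ) (X : Fin 3 → ℝ) : ℝ :=
  -(1/2) * killingF a b c X X
    - (1/2) * ∑ i : Fin 3,
        gMet x y z (milnorBracket a b c X (onb x y z i)) (milnorBracket a b c X (onb x y z i))
    + (1/4) * ∑ i : Fin 3, ∑ j : Fin 3,
        (gMet x y z (milnorBracket a b c (onb x y z i) (onb x y z j)) X) ^ 2

/-- For the unimodular Lie algebra with Milnor basis `{u,v,w}` and metric `(x,y,z)`,
`Ric(u,u) = (1/(2yz)) (b²x² − (cy − az)²)`. -/
theorem ric_uu_formula (a b c x y z : ℝ) (hx : 0 < x) (hy : 0 < y) (hz : 0 < z) :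
    ricQ a b c x y z (Pi.single 0 1)
      = (1 / (2 * (y * z))) * (b ^ 2 * x ^ 2 - (c * y - a * z) ^ 2) := by
  simp only [ricQ, killingF, gMet, onb, milnorBracket, Fin.sum_univ_three,
    Matrix.cons_val_zero, Matrix.cons_val_one, Matrix.head_cons, Matrix.cons_val_two,
    Matrix.tail_cons, Pi.smul_apply, smul_eq_mul, Pi.single_apply]
  have hsy : (Real.sqrt y)⁻¹ ^ 2 = y⁻¹ := by
    rw [← Real.sqrt_inv]; exact Real.sq_sqrt (by positivity)
  have hsz : (Real.sqrt z)⁻¹ ^ 2 = z⁻¹ := by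
    rw [← Real.sqrt_inv]; exact Real.sq_sqrt (by positivity)
  norm_num [Fin.ext_iff]
  ring_nf
  simp only [hsy, hsz]
  field_simp
end
end

section
/- Every 3-dimensional unimodular real Lie algebra admits a Milnor basis, i.e. a basis {u,v,w} with [u,v]=aw, [v,w]=bu, [w,u]=cv for some real numbers a, b, c. -/
open scoped RealInnerProductSpace

noncomputable section MilnorAux
local notation "E3" => EuclideanSpace ℝ (Fin 3)
local notation "eb" => EuclideanSpace.basisFun (Fin 3) ℝ

def gE : E3 ≃ₗ[ℝ] (Fin 3 → ℝ) := (EuclideanSpace.equiv (Fin 3) ℝ).toLinearEquiv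

def crL : E3 →ₗ[ℝ] E3 →ₗ[ℝ] E3 :=
  LinearMap.mk₂ ℝ (fun x y => gE.symm (crossProduct (gE x) (gE y)))
    (by intros; simp) (by intros; simp) (by intros; simp) (by intros; simp)

lemma inner_crL_left (x y : E3) : ⟪x, crL x y⟫ = 0 := by
  have := dot_self_cross (gE x) (gE y)
  simpa [crL, PiLp.inner_apply, dotProduct, gE, mul_comm] using this

lemma inner_crL_right (x y : E3) : ⟪y, crL x y⟫ = 0 := by
  have := dot_cross_self (gE x) (gE y)
  simpa [crL, PiLp.inner_apply, dotProduct, gE, mul_comm] using this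

lemma gE_eb (j : Fin 3) : gE (eb j) = Pi.single j 1 := by
  rw [EuclideanSpace.basisFun_apply]; rfl

lemma crL_eb01 : crL (eb 0) (eb 1) = eb 2 := by
  apply gE.injective; funext i
  rw [show gE ((crL (eb 0)) (eb 1)) = crossProduct (gE (eb 0)) (gE (eb 1)) from by
    simp [crL, gE]; rfl]
  rw [gE_eb, gE_eb, gE_eb, cross_apply]
  fin_cases i <;> simp [Pi.single_apply]

lemma crL_eb12 : crL (eb 1) (eb 2) = eb 0 := by
  apply gE.injective; funext i
  rw [show gE ((crL (eb 1)) (eb 2)) = crossProduct (gE (eb 1)) (gE (eb 2)) from by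
    simp [crL, gE]; rfl]
  rw [gE_eb, gE_eb, gE_eb, cross_apply]
  fin_cases i <;> simp [Pi.single_apply]

lemma crL_eb20 : crL (eb 2) (eb 0) = eb 1 := by
  apply gE.injective; funext i
  rw [show gE ((crL (eb 2)) (eb 0)) = crossProduct (gE (eb 2)) (gE (eb 0)) from by
    simp [crL, gE]; rfl]
  rw [gE_eb, gE_eb, gE_eb, cross_apply]
  fin_cases i <;> simp [Pi.single_apply]

lemma crL_self (x : E3) : crL x x = 0 := by
  have := cross_self (gE x)
  simp [crL, this]

lemma crL_anti (x y : E3) : crL y x = - crL x y := by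
  have h := crL_self (x + y)
  simp only [map_add, LinearMap.add_apply, crL_self] at h
  linear_combination (norm := abel) h

theorem milnor_aux (β : E3 →ₗ[ℝ] E3 →ₗ[ℝ] E3) (halt : ∀ x, β x x = 0)
    (htr : ∀ x, LinearMap.trace ℝ (EuclideanSpace ℝ (Fin 3)) (β x) = 0) :
    ∃ (a b c : ℝ) (B : Module.Basis (Fin 3) ℝ (EuclideanSpace ℝ (Fin 3))),
      β (B 0) (B 1) = a • B 2 ∧ β (B 1) (B 2) = b • B 0 ∧ β (B 2) (B 0) = c • B 1 := by
  have hanti : ∀ x y, β y x = - β x y := by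
    intro x y
    have h := halt (x + y)
    simp only [map_add, LinearMap.add_apply, halt] at h
    linear_combination (norm := abel) h
  -- the Milnor map M
  set M : E3 →ₗ[ℝ] E3 :=
    (eb).toBasis.constr ℝ ![β (eb 1) (eb 2), β (eb 2) (eb 0), β (eb 0) (eb 1)] with hMdef
  have hM0 : M (eb 0) = β (eb 1) (eb 2) := by
    have h := (eb).toBasis.constr_basis ℝ
      ![β (eb 1) (eb 2), β (eb 2) (eb 0), β (eb 0) (eb 1)] 0
    simpa only [OrthonormalBasis.coe_toBasis, Matrix.cons_val_zero, Matrix.cons_val_one,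
      Matrix.head_cons, Matrix.cons_val_two, Matrix.tail_cons] using h
  have hM1 : M (eb 1) = β (eb 2) (eb 0) := by
    have h := (eb).toBasis.constr_basis ℝ
      ![β (eb 1) (eb 2), β (eb 2) (eb 0), β (eb 0) (eb 1)] 1
    simpa only [OrthonormalBasis.coe_toBasis, Matrix.cons_val_zero, Matrix.cons_val_one,
      Matrix.head_cons, Matrix.cons_val_two, Matrix.tail_cons] using h
  have hM2 : M (eb 2) = β (eb 0) (eb 1) := by
    have h := (eb).toBasis.constr_basis ℝ
      ![β (eb 1) (eb 2), β (eb 2) (eb 0), β (eb 0) (eb 1)] 2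
    simpa only [OrthonormalBasis.coe_toBasis, Matrix.cons_val_zero, Matrix.cons_val_one,
      Matrix.head_cons, Matrix.cons_val_two, Matrix.tail_cons] using h
  -- β factors through the cross product
  have h9 : ∀ i j : Fin 3, β (eb i) (eb j) = M (crL (eb i) (eb j)) := by
    have b01 : β (eb 0) (eb 1) = M (crL (eb 0) (eb 1)) := by rw [crL_eb01, hM2]
    have b12 : β (eb 1) (eb 2) = M (crL (eb 1) (eb 2)) := by rw [crL_eb12, hM0]
    have b20 : β (eb 2) (eb 0) = M (crL (eb 2) (eb 0)) := by rw [crL_eb20, hM1]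
    have b10 : β (eb 1) (eb 0) = M (crL (eb 1) (eb 0)) := by
      rw [hanti, crL_anti, map_neg, b01]
    have b21 : β (eb 2) (eb 1) = M (crL (eb 2) (eb 1)) := by
      rw [hanti, crL_anti, map_neg, b12]
    have b02 : β (eb 0) (eb 2) = M (crL (eb 0) (eb 2)) := by
      rw [hanti, crL_anti, map_neg, b20]
    have bd : ∀ i : Fin 3, β (eb i) (eb i) = M (crL (eb i) (eb i)) := by
      intro i; rw [halt, crL_self, map_zero]
    intro i j
    fin_cases i <;> fin_cases j
    · exact bd 0
    · exact b01
    · exact b02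
    · exact b10
    · exact bd 1
    · exact b12
    · exact b20
    · exact b21
    · exact bd 2
  have hfac : ∀ x y, β x y = M (crL x y) := by
    intro x y
    conv_lhs => rw [← (eb).toBasis.sum_repr x, ← (eb).toBasis.sum_repr y]
    conv_rhs => rw [← (eb).toBasis.sum_repr x, ← (eb).toBasis.sum_repr y]
    simp only [map_sum, map_smul, LinearMap.sum_apply, LinearMap.smul_apply,
      Finset.smul_sum, OrthonormalBasis.coe_toBasis]
    exact Finset.sum_congr rfl fun i _ => Finset.sum_congr rfl fun j _ => by rw [h9]
  -- trace computation
  have htrace : ∀ x, LinearMap.trace ℝ (EuclideanSpace ℝ (Fin 3)) (β x)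
      = ∑ i, ⟪eb i, β x (eb i)⟫ := by
    intro x
    rw [LinearMap.trace_eq_matrix_trace ℝ (eb).toBasis, Matrix.trace]
    refine Finset.sum_congr rfl fun i _ => ?_
    rw [Matrix.diag_apply, LinearMap.toMatrix_apply]
    rw [OrthonormalBasis.coe_toBasis, OrthonormalBasis.coe_toBasis_repr_apply,
      EuclideanSpace.basisFun_repr, PiLp.inner_apply]
    rw [EuclideanSpace.basisFun_apply]
    simp [EuclideanSpace.single_apply]
  -- symmetry of M on basis vectors
  have b10 : β (eb 1) (eb 0) = -(M (eb 2)) := by rw [hanti, hM2]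
  have b21 : β (eb 2) (eb 1) = -(M (eb 0)) := by rw [hanti, hM0]
  have b02 : β (eb 0) (eb 2) = -(M (eb 1)) := by rw [hanti, hM1]
  have ht : ∀ k : Fin 3, ∑ i, ⟪eb i, β (eb k) (eb i)⟫ = 0 := fun k => by
    rw [← htrace]; exact htr _
  have t0 := ht 0
  have t1 := ht 1
  have t2 := ht 2
  rw [Fin.sum_univ_three] at t0 t1 t2
  rw [halt, inner_zero_right, ← hM2, b02, inner_neg_right] at t0
  rw [b10, inner_neg_right, halt, inner_zero_right, ← hM0] at t1
  rw [← hM1, b21, inner_neg_right, halt, inner_zero_right] at t2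
  have hsymb : ∀ i j : Fin 3, ⟪M (eb i), eb j⟫ = ⟪eb i, M (eb j)⟫ := by
    intro i j
    fin_cases i <;> fin_cases j
    · show ⟪M (eb 0), eb 0⟫ = ⟪eb 0, M (eb 0)⟫; exact real_inner_comm _ _
    · show ⟪M (eb 0), eb 1⟫ = ⟪eb 0, M (eb 1)⟫; rw [real_inner_comm]; linarith
    · show ⟪M (eb 0), eb 2⟫ = ⟪eb 0, M (eb 2)⟫; rw [real_inner_comm]; linarith
    · show ⟪M (eb 1), eb 0⟫ = ⟪eb 1, M (eb 0)⟫; rw [real_inner_comm]; linarith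
    · show ⟪M (eb 1), eb 1⟫ = ⟪eb 1, M (eb 1)⟫; exact real_inner_comm _ _
    · show ⟪M (eb 1), eb 2⟫ = ⟪eb 1, M (eb 2)⟫; rw [real_inner_comm]; linarith
    · show ⟪M (eb 2), eb 0⟫ = ⟪eb 2, M (eb 0)⟫; rw [real_inner_comm]; linarith
    · show ⟪M (eb 2), eb 1⟫ = ⟪eb 2, M (eb 1)⟫; rw [real_inner_comm]; linarith
    · show ⟪M (eb 2), eb 2⟫ = ⟪eb 2, M (eb 2)⟫; exact real_inner_comm _ _
  -- symmetry of M
  have hsym : M.IsSymmetric := by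
    intro x y
    conv_lhs => rw [← (eb).toBasis.sum_repr x, ← (eb).toBasis.sum_repr y]
    conv_rhs => rw [← (eb).toBasis.sum_repr x, ← (eb).toBasis.sum_repr y]
    simp only [map_sum, map_smul, sum_inner, inner_sum, real_inner_smul_left,
      real_inner_smul_right, OrthonormalBasis.coe_toBasis]
    exact Finset.sum_congr rfl fun i _ => Finset.sum_congr rfl fun j _ => by rw [hsymb]
  -- spectral theorem
  have hrank : Module.finrank ℝ (EuclideanSpace ℝ (Fin 3)) = 3 := finrank_euclideanSpace_fin
  set b' := hsym.eigenvectorBasis hrank with hb'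
  set μ := hsym.eigenvalues hrank with hμ
  have heig : ∀ i, M (b' i) = μ i • b' i := fun i => by
    exact_mod_cast hsym.apply_eigenvectorBasis hrank i
  -- cross products of the eigenbasis
  have hc : ∀ i j : Fin 3, crL (b' i) (b' j) = ∑ l, ⟪b' l, crL (b' i) (b' j)⟫ • b' l :=
    fun i j => (b'.sum_repr' _).symm
  have hc012 : crL (b' 0) (b' 1) = ⟪b' 2, crL (b' 0) (b' 1)⟫ • b' 2 := by
    have h := hc 0 1
    rw [Fin.sum_univ_three, inner_crL_left, inner_crL_right] at h
    simpa using h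
  have hc120 : crL (b' 1) (b' 2) = ⟪b' 0, crL (b' 1) (b' 2)⟫ • b' 0 := by
    have h := hc 1 2
    rw [Fin.sum_univ_three, inner_crL_left, inner_crL_right] at h
    simpa using h
  have hc201 : crL (b' 2) (b' 0) = ⟪b' 1, crL (b' 2) (b' 0)⟫ • b' 1 := by
    have h := hc 2 0
    rw [Fin.sum_univ_three, inner_crL_left, inner_crL_right] at h
    simpa using h
  have main : ∀ i j k : Fin 3, crL (b' i) (b' j) = ⟪b' k, crL (b' i) (b' j)⟫ • b' k →
      β (b' i) (b' j) = (⟪b' k, crL (b' i) (b' j)⟫ * μ k) • b' k := by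
    intro i j k hcr
    have h : β (b' i) (b' j) = M (⟪b' k, crL (b' i) (b' j)⟫ • b' k) := by
      rw [hfac]; exact congrArg M hcr
    rw [h, map_smul, heig, smul_smul, mul_comm]
  refine ⟨⟪b' 2, crL (b' 0) (b' 1)⟫ * μ 2, ⟪b' 0, crL (b' 1) (b' 2)⟫ * μ 0,
    ⟪b' 1, crL (b' 2) (b' 0)⟫ * μ 1, b'.toBasis, ?_, ?_, ?_⟩ <;>
    simp only [OrthonormalBasis.coe_toBasis]
  · exact main 0 1 2 hc012
  · exact main 1 2 0 hc120
  · exact main 2 0 1 hc201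

end MilnorAux

/-- Every 3-dimensional unimodular real Lie algebra (i.e. `tr (ad X) = 0` for all `X`)
admits a Milnor basis: a basis `{u, v, w}` with `[u,v] = a•w`, `[v,w] = b•u`, `[w,u] = c•v`
for some real numbers `a, b, c`. -/
theorem exists_milnor_basis (L : Type*) [LieRing L] [LieAlgebra ℝ L]
    [Module.Finite ℝ L] (hdim : Module.finrank ℝ L = 3)
    (hunimod : ∀ X : L, LinearMap.trace ℝ L (LieAlgebra.ad ℝ L X) = 0) :
    ∃ (a b c : ℝ) (B : Module.Basis (Fin 3) ℝ L),
      ⁅B 0, B 1⁆ = a • B 2 ∧ ⁅B 1, B 2⁆ = b • B 0 ∧ ⁅B 2, B 0⁆ = c • B 1 := by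
  classical
  let e : Module.Basis (Fin 3) ℝ L := Module.finBasisOfFinrankEq ℝ L hdim
  let f : L ≃ₗ[ℝ] EuclideanSpace ℝ (Fin 3) := e.equivFun.trans gE.symm
  let β : EuclideanSpace ℝ (Fin 3) →ₗ[ℝ] EuclideanSpace ℝ (Fin 3) →ₗ[ℝ]
      EuclideanSpace ℝ (Fin 3) :=
    LinearMap.mk₂ ℝ (fun x y => f ⁅f.symm x, f.symm y⁆)
      (by intros; simp [add_lie]) (by intros; simp [smul_lie])
      (by intros; simp [lie_add]) (by intros; simp [lie_smul])
  have hβ : ∀ x y, β x y = f ⁅f.symm x, f.symm y⁆ := fun x y => rfl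
  have halt : ∀ x, β x x = 0 := by intro x; simp [hβ]
  have htr : ∀ x, LinearMap.trace ℝ (EuclideanSpace ℝ (Fin 3)) (β x) = 0 := by
    intro x
    have hconj : β x = f.conj (LieAlgebra.ad ℝ L (f.symm x)) := by
      ext y
      simp [hβ, LinearEquiv.conj_apply, LieAlgebra.ad_apply]
    rw [hconj, LinearMap.trace_conj']
    exact hunimod _
  obtain ⟨a, b, c, B', h1, h2, h3⟩ := milnor_aux β halt htr
  refine ⟨a, b, c, B'.map f.symm, ?_, ?_, ?_⟩ <;>
    simp only [Module.Basis.map_apply] <;>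
    [have h := h1; have h := h2; have h := h3] <;>
    [skip; skip; skip] <;>
    · rw [hβ] at h
      have := congrArg f.symm h
      rw [LinearEquiv.symm_apply_apply] at this
      rw [this, map_smul]
end
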